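/- arXiv:1707.07211 — 3 statements merged into one kernel-verified Lean document; each statement's English description precedes it below -/
import Mathlib

section
/- Let $T \in (0,\pi^2)$, $\mu\in\mathbb{R}$, and $\alpha(z)$ as in the context. Then $\alpha$ is analytic at $\widetilde{z}_c = i\mu - \frac{2i}{T}\sqrt{\pi^2-T}$, vanishes there, and its derivative satisfies $\alpha'(\widetilde{z}_c) = -\frac{T^{3/2}}{4\pi^2}$, i.e. $\alpha(z) = -\frac{T^{3/2}}{4\pi^2}(z-\widetilde{z}_c) + O((z-\widetilde{z}_c)^2)$ near $\widetilde{z}_c$. -/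
open Filter

set_option maxHeartbeats 1000000

theorem stmt6 (T μ : ℝ) (hT : 0 < T) (hT2 : T < Real.pi ^ 2)
    (a b ztc : ℂ) (ha : a = -(2 / Real.sqrt T) + Complex.I * μ)
    (hb : b = 2 / Real.sqrt T + Complex.I * μ)
    (hz : ztc = Complex.I * μ - (2 * Complex.I / T) * Real.sqrt (Real.pi ^ 2 - T))
    (R : ℂ → ℂ)
    (hRan : ∀ z ∉ segment ℝ a b, AnalyticAt ℂ R z)
    (hRsq : ∀ z ∉ segment ℝ a b, R z ^ 2 = (z - a) * (z - b))
    (hRinf : Tendsto (fun z => R z / z) (Bornology.cobounded ℂ) (nhds 1))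
    (D : ℂ → ℂ)
    (hD : ∀ z, D z = (Real.sqrt T / (2 * Complex.I)) * (z - Complex.I * μ + R z))
    (α : ℂ → ℂ)
    (hα : ∀ z, α z = Complex.I * (D ztc - D z) / (1 + D ztc * D z)) :
    AnalyticAt ℂ α ztc ∧ α ztc = 0 ∧
      deriv α ztc = -((T * Real.sqrt T : ℝ) : ℂ) / (4 * Real.pi ^ 2) := by
  have hπ : (0:ℝ) < Real.pi := Real.pi_pos
  have hT0 : T ≠ 0 := ne_of_gt hT
  set q : ℝ := Real.sqrt T with hqdef
  have hq : 0 < q := Real.sqrt_pos.2 hT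
  have hq2 : q ^ 2 = T := Real.sq_sqrt hT.le
  have hqne : (q:ℂ) ≠ 0 := by exact_mod_cast hq.ne'
  have hTne : (T:ℂ) ≠ 0 := by exact_mod_cast hT0
  have hπne : ((Real.pi:ℝ):ℂ) ≠ 0 := by exact_mod_cast hπ.ne'
  have hpT : (0:ℝ) < Real.pi ^ 2 - T := by linarith
  set p : ℝ := Real.sqrt (Real.pi ^ 2 - T) with hpdef
  have hp : 0 < p := Real.sqrt_pos.2 hpT
  have hp2 : p ^ 2 = Real.pi ^ 2 - T := Real.sq_sqrt hpT.le
  set s : ℝ := 2 * p / T with hsdef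
  have hs : 0 < s := by positivity
  -- casts of a, b, ztc
  have ha' : a = ((-(2/q) : ℝ):ℂ) + Complex.I * (μ:ℝ) := by rw [ha]; push_cast; ring
  have hb' : b = (((2/q) : ℝ):ℂ) + Complex.I * (μ:ℝ) := by rw [hb]; push_cast; ring
  have hztc : ztc = Complex.I * ((μ - s : ℝ):ℂ) := by
    rw [hz, hsdef]; push_cast; field_simp

  -- points in the segment have imaginary part μ
  have hsegim : ∀ z ∈ segment ℝ a b, z.im = μ := by
    rintro z ⟨u, v, hu, hv, huv, rfl⟩
    have himuv : (u • a + v • b).im = u * μ + v * μ := by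
      rw [ha', hb']; simp [Complex.smul_im]
    rw [himuv]; linear_combination μ * huv
  -- the path γ
  set γ : ℝ → ℂ := fun t => Complex.I * ((μ - s - t : ℝ):ℂ) with hγdef
  have hγ0 : γ 0 = ztc := by rw [hztc]; simp [hγdef]
  have hγim : ∀ t, (γ t).im = μ - s - t := by intro t; simp [hγdef]
  have hmem : ∀ t : ℝ, 0 ≤ t → γ t ∉ segment ℝ a b := by
    intro t ht hmem
    have h1 := hsegim _ hmem
    rw [hγim] at h1
    linarith
  have hq2c : ((q:ℝ):ℂ)^2 = ((T:ℝ):ℂ) := by exact_mod_cast hq2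
  -- square of R along γ
  have hkey : ∀ t : ℝ, 0 ≤ t → R (γ t) ^ 2 = ((-((s+t)^2 + 4/T) : ℝ):ℂ) := by
    intro t ht
    rw [hRsq _ (hmem t ht), ha', hb', hγdef]
    push_cast
    rw [show ((T:ℝ):ℂ) = ((q:ℝ):ℂ)^2 from hq2c.symm]
    field_simp [hqne]
    simp only [hsdef]
    push_cast
    linear_combination ((2*(p:ℂ)/(T:ℂ) + (t:ℂ))^2 * ((q:ℝ):ℂ)^2) * Complex.I_sq
  -- purely imaginary lemma
  have pureim : ∀ (w : ℂ) (c : ℝ), c < 0 → w ^ 2 = (c:ℂ) → w.re = 0 ∧ w.im ^ 2 = -c := by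
    intro w c hc h
    have h1 := congrArg Complex.re h
    have h2 := congrArg Complex.im h
    simp [pow_two, Complex.mul_re, Complex.mul_im] at h1 h2
    have hprod : w.re * w.im = 0 := by linarith
    rcases mul_eq_zero.mp hprod with h3 | h3
    · exact ⟨h3, by rw [h3] at h1; nlinarith⟩
    · exfalso; rw [h3] at h1; nlinarith
  have hcneg : ∀ t : ℝ, -((s+t)^2 + 4/T) < 0 := by
    intro t
    have : (0:ℝ) < 4/T := by positivity
    nlinarith [sq_nonneg (s+t)]
  -- the imaginary part along γ
  set y : ℝ → ℝ := fun t => (R (γ t)).im with hydef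
  have hyprop : ∀ t : ℝ, 0 ≤ t → (R (γ t)).re = 0 ∧ y t ^ 2 = (s+t)^2 + 4/T := by
    intro t ht
    have := pureim _ _ (hcneg t) (hkey t ht)
    simpa [hydef] using this
  have hyne : ∀ t : ℝ, 0 ≤ t → y t ≠ 0 := by
    intro t ht h0
    have h1 := (hyprop t ht).2
    rw [h0] at h1
    have : (0:ℝ) < 4/T := by positivity
    nlinarith [sq_nonneg (s+t)]
  -- continuity of y on [0, ∞)
  have hycont : ∀ t : ℝ, 0 ≤ t → ContinuousAt y t := by
    intro t ht
    have hc1 : Continuous (fun t : ℝ => μ - s - t) := by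
      exact (continuous_const.sub continuous_id)
    have hγc : Continuous γ := by
      rw [hγdef]; exact continuous_const.mul (Complex.continuous_ofReal.comp hc1)
    exact Complex.continuous_im.continuousAt.comp
      (((hRan _ (hmem t ht)).continuousAt).comp hγc.continuousAt)
  -- γ tends to cobounded
  have hγcob : Tendsto γ atTop (Bornology.cobounded ℂ) := by
    rw [← tendsto_norm_atTop_iff_cobounded]
    have h1 : Tendsto (fun t : ℝ => |t - (μ - s)|) atTop atTop :=
      tendsto_abs_atTop_atTop.comp (tendsto_atTop_add_const_right atTop (-(μ - s)) tendsto_id)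
    refine h1.congr (fun t => ?_)
    have : γ t = Complex.I * ((μ - s - t : ℝ):ℂ) := by rw [hγdef]
    rw [this, norm_mul, Complex.norm_I, Complex.norm_real, one_mul, Real.norm_eq_abs,
      abs_sub_comm]
  have hlim : Tendsto (fun t => R (γ t) / γ t) atTop (nhds 1) := hRinf.comp hγcob
  have hlimre : Tendsto (fun t => (R (γ t) / γ t).re) atTop (nhds 1) := by
    have := (Complex.continuous_re.tendsto (1:ℂ)).comp hlim
    exact this
  -- eventually y t < 0
  have hev : ∀ᶠ t : ℝ in atTop, y t < 0 := by
    have e1 : ∀ᶠ t : ℝ in atTop, (1/2 : ℝ) < (R (γ t) / γ t).re :=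
      hlimre.eventually_const_lt (by norm_num)
    filter_upwards [e1, eventually_ge_atTop (0:ℝ), eventually_gt_atTop (μ - s)] with t h1 h2 h3
    have hre0 := (hyprop t h2).1
    have hrne : μ - s - t ≠ 0 := by linarith
    have hRγ : R (γ t) = (y t : ℂ) * Complex.I := by
      apply Complex.ext <;> simp [hydef, hre0]
    have hquot : R (γ t) / γ t = ((y t / (μ - s - t) : ℝ) : ℂ) := by
      have hγt : γ t = Complex.I * ((μ - s - t : ℝ):ℂ) := by rw [hγdef]
      have hne2 : ((μ:ℂ) - (s:ℝ) - (t:ℝ)) ≠ 0 := by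
        intro h0
        apply hrne
        exact_mod_cast (by push_cast at h0 ⊢; linear_combination h0 : ((μ - s - t : ℝ):ℂ) = 0)
      rw [hRγ, hγt]
      push_cast
      field_simp [Complex.I_ne_zero]
    rw [hquot] at h1
    simp only [Complex.ofReal_re] at h1
    have hd : μ - s - t < 0 := by linarith
    have hpos : 0 < y t / (μ - s - t) := by linarith
    rcases div_pos_iff.mp hpos with ⟨_, h⟩ | ⟨h, _⟩
    · linarith
    · exact h
  -- choose t1 with y t1 < 0
  obtain ⟨t1, ht1pos, ht1neg⟩ : ∃ t1 : ℝ, 0 ≤ t1 ∧ y t1 < 0 := by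
    rcases ((eventually_ge_atTop (0:ℝ)).and hev).exists with ⟨t1, h1, h2⟩
    exact ⟨t1, h1, h2⟩
  -- y 0 < 0 by IVT
  have hy0neg : y 0 < 0 := by
    by_contra hcon
    push_neg at hcon
    have hy0pos : 0 < y 0 := lt_of_le_of_ne hcon (Ne.symm (hyne 0 le_rfl))
    have hcont : ContinuousOn y (Set.Icc 0 t1) := fun t ht =>
      (hycont t ht.1).continuousWithinAt
    have hmemIcc : (0:ℝ) ∈ Set.Icc (y t1) (y 0) := ⟨ht1neg.le, hy0pos.le⟩
    obtain ⟨t, htIcc, hyt⟩ := intermediate_value_Icc' ht1pos hcont hmemIcc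
    exact hyne t htIcc.1 hyt
  -- value of y 0
  have hy0sq : y 0 ^ 2 = (2 * Real.pi / T) ^ 2 := by
    have h1 := (hyprop 0 le_rfl).2
    rw [h1, hsdef]
    field_simp
    linear_combination 4 * hp2
  have hy0 : y 0 = -(2 * Real.pi / T) := by
    have hfac : (y 0 - 2 * Real.pi / T) * (y 0 + 2 * Real.pi / T) = 0 := by
      linear_combination hy0sq
    have hc : 0 < 2 * Real.pi / T := by positivity
    rcases mul_eq_zero.mp hfac with h | h
    · linarith
    · linarith
  -- value of R at ztc
  have hR0 : R ztc = ((-(2 * Real.pi / T) : ℝ):ℂ) * Complex.I := by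
    rw [← hγ0]
    have hre0 := (hyprop 0 le_rfl).1
    apply Complex.ext
    · simp [hre0]
    · simpa [hydef] using hy0
  -- neighborhood facts
  have hns : ztc ∉ segment ℝ a b := by rw [← hγ0]; exact hmem 0 le_rfl
  have hRanz : AnalyticAt ℂ R ztc := hRan ztc hns
  have hU : IsOpen {z : ℂ | z.im < μ} := isOpen_lt Complex.continuous_im continuous_const
  have hztcU : ztc ∈ {z : ℂ | z.im < μ} := by
    rw [hztc]; simp only [Set.mem_setOf_eq, Complex.mul_im, Complex.I_re, Complex.I_im,
      Complex.ofReal_re, Complex.ofReal_im]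
    simp; linarith
  have hevsq : ∀ᶠ z in nhds ztc, R z ^ 2 = (z - a) * (z - b) := by
    filter_upwards [hU.mem_nhds hztcU] with z hzU
    refine hRsq z (fun hseg => ?_)
    have := hsegim z hseg
    have hzU' : z.im < μ := hzU
    linarith
  have hRd : HasDerivAt R (deriv R ztc) ztc := hRanz.differentiableAt.hasDerivAt
  have h1 := hRd.pow 2
  have h2 : HasDerivAt (fun z : ℂ => (z - a) * (z - b)) (1 * (ztc - b) + (ztc - a) * 1) ztc :=
    ((hasDerivAt_id ztc).sub_const a).mul ((hasDerivAt_id ztc).sub_const b)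
  have h3 : HasDerivAt (fun z => R z ^ 2) (1 * (ztc - b) + (ztc - a) * 1) ztc :=
    h2.congr_of_eventuallyEq hevsq
  have huniq := h1.unique h3
  have hRne : R ztc ≠ 0 := by
    rw [hR0]
    have hval : (-(2 * Real.pi / T) : ℝ) ≠ 0 := by
      have : 0 < 2 * Real.pi / T := by positivity
      exact neg_ne_zero.mpr (ne_of_gt this)
    exact mul_ne_zero (Complex.ofReal_ne_zero.mpr hval) Complex.I_ne_zero
  have hC : (((2:ℕ):ℂ) * R ztc ^ 1) ≠ 0 :=
    mul_ne_zero (by norm_num) (pow_ne_zero 1 hRne)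
  have htarg : (((2:ℕ):ℂ) * R ztc ^ 1) * ((p / Real.pi : ℝ):ℂ) = 1 * (ztc - b) + (ztc - a) * 1 := by
    rw [hR0, hztc, ha', hb']
    simp only [hsdef]
    push_cast
    field_simp [hTne, hπne]
    ring
  have hrd : deriv R ztc = ((p / Real.pi : ℝ):ℂ) := mul_left_cancel₀ hC (huniq.trans htarg.symm)
  -- D facts
  have hDfun : D = fun z => ((q:ℝ):ℂ) / (2 * Complex.I) * (z - Complex.I * μ + R z) := funext hD
  have hDan : AnalyticAt ℂ D ztc := by
    rw [hDfun]
    exact analyticAt_const.mul ((analyticAt_id.sub analyticAt_const).add hRanz)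
  have hRd2 : HasDerivAt R ((p / Real.pi : ℝ):ℂ) ztc := by rw [← hrd]; exact hRd
  have hDd : HasDerivAt D (((q:ℝ):ℂ) / (2 * Complex.I) * (1 + ((p / Real.pi : ℝ):ℂ))) ztc := by
    rw [hDfun]
    exact (((hasDerivAt_id ztc).sub_const _).add hRd2).const_mul _
  have hp2c : ((p:ℝ):ℂ)^2 = ((Real.pi:ℝ):ℂ)^2 - ((T:ℝ):ℂ) := by exact_mod_cast hp2
  have hDc : D ztc = ((-((p + Real.pi) / q) : ℝ):ℂ) := by
    rw [hD ztc, hR0, hztc]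
    simp only [hsdef]
    push_cast
    rw [show ((T:ℝ):ℂ) = ((q:ℝ):ℂ)^2 from hq2c.symm]
    field_simp [hqne]
    ring_nf
  -- denominator
  have hdenval : 1 + D ztc * D ztc = (((1 + ((p + Real.pi)/q)^2 : ℝ)):ℂ) := by
    rw [hDc]; push_cast; ring
  have hdenne : 1 + D ztc * D ztc ≠ 0 := by
    rw [hdenval]
    exact_mod_cast (by positivity : (1 + ((p + Real.pi)/q)^2 : ℝ) ≠ 0)
  have hαfun : α = fun z => Complex.I * (D ztc - D z) / (1 + D ztc * D z) := funext hα
  have hαan : AnalyticAt ℂ α ztc := by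
    rw [hαfun]
    exact (analyticAt_const.mul (analyticAt_const.sub hDan)).div
      (analyticAt_const.add (analyticAt_const.mul hDan)) hdenne
  have hα0 : α ztc = 0 := by rw [hα ztc]; simp
  refine ⟨hαan, hα0, ?_⟩
  set d' : ℂ := ((q:ℝ):ℂ) / (2 * Complex.I) * (1 + ((p / Real.pi : ℝ):ℂ)) with hd'def
  have hnum : HasDerivAt (fun z => Complex.I * (D ztc - D z)) (Complex.I * (0 - d')) ztc :=
    ((hasDerivAt_const ztc (D ztc)).sub hDd).const_mul _
  have hdenD : HasDerivAt (fun z => 1 + D ztc * D z) (0 + D ztc * d') ztc :=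
    (hasDerivAt_const ztc 1).add (hDd.const_mul _)
  have hαd : HasDerivAt α ((Complex.I * (0 - d') * (1 + D ztc * D ztc)
      - Complex.I * (D ztc - D ztc) * (0 + D ztc * d')) / (1 + D ztc * D ztc) ^ 2) ztc := by
    rw [hαfun]
    exact hnum.div hdenD hdenne
  rw [hαd.deriv]
  rw [hDc, hd'def]
  have hABne : (1 + ((-((p + Real.pi) / q) : ℝ):ℂ) * ((-((p + Real.pi) / q) : ℝ):ℂ)) ≠ 0 := by
    rw [hDc] at hdenne; exact hdenne
  have h4pi : ((4:ℂ) * ((Real.pi:ℝ):ℂ)^2) ≠ 0 := by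
    apply mul_ne_zero (by norm_num)
    exact pow_ne_zero 2 hπne
  rw [div_eq_div_iff (pow_ne_zero 2 hABne) h4pi]
  push_cast
  field_simp [hqne, hπne, Complex.I_ne_zero]
  linear_combination (2*((q:ℝ):ℂ)^2*(((q:ℝ):ℂ)^2 + (((p:ℝ):ℂ) + ((Real.pi:ℝ):ℂ))^2)) * hp2c + (2*((q:ℝ):ℂ)^2*(((q:ℝ):ℂ)^2 + (((p:ℝ):ℂ) + ((Real.pi:ℝ):ℂ))^2) - 2*(((q:ℝ):ℂ)^2 + (((p:ℝ):ℂ) + ((Real.pi:ℝ):ℂ))^2)^2) * hq2c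
end

section
/- Let $T\in(0,\pi^2)$ and $k \geq 0$ an integer. With $\gamma_* = \frac{1}{\sqrt\pi}(\sqrt{\pi^2-T}+i\sqrt{T})^{1/2}$ and $\rho := \frac{\alpha_*}{W_*} = \frac{-T}{(2\pi)^{3/2}(\pi^2-T)^{1/4}}$, the $2\times 2$ matrix $F_0 = \alpha_\infty^{-k\sigma_3} M \rho^{k\sigma_3}$, where $M = \begin{pmatrix} \frac{\gamma_*+\gamma_*^{-1}}{2} & \frac{\gamma_*-\gamma_*^{-1}}{-2i} \\ \frac{\gamma_*-\gamma_*^{-1}}{2i} & \frac{\gamma_*+\gamma_*^{-1}}{2}\end{pmatrix}$, $\alpha_\infty = \frac{\sqrt{\pi^2-T}+\pi}{\sqrt{T}}i$, and $\sigma_3 = \mathrm{diag}(1,-1)$, satisfies $\det F_0 = 1$, $(F_0)_{11}(F_0)_{21} = \frac{T^{(4k+1)/2}}{(2\pi)^{3k+1}(\pi^2-T)^{k/2}}$, and $(F_0)_{12}(F_0)_{22} = -\frac{(2\pi)^{3k-1}(\pi^2-T)^{k/2}}{T^{(4k-1)/2}}$. -/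
open Matrix

theorem stmt15 (T : ℝ) (hT : 0 < T) (hT2 : T < Real.pi ^ 2) (k : ℕ)
    (γ ρ αinf : ℂ)
    (hγ : γ = (1 / (Real.sqrt Real.pi : ℂ)) *
      ((Real.sqrt (Real.pi ^ 2 - T) + Complex.I * Real.sqrt T) ^ (1 / 2 : ℂ)))
    (hρ : ρ = (-T / ((2 * Real.pi) ^ ((3 : ℝ) / 2) * (Real.pi ^ 2 - T) ^ ((1 : ℝ) / 4)) : ℝ))
    (hαinf : αinf = ((Real.sqrt (Real.pi ^ 2 - T) + Real.pi) / Real.sqrt T) * Complex.I)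
    (M F0 : Matrix (Fin 2) (Fin 2) ℂ)
    (hM : M = !![(γ + γ⁻¹) / 2, (γ - γ⁻¹) / (-2 * Complex.I);
                 (γ - γ⁻¹) / (2 * Complex.I), (γ + γ⁻¹) / 2])
    (hF0 : F0 = !![αinf ^ (-(k : ℤ)), 0; 0, αinf ^ (k : ℤ)] * M *
                !![ρ ^ (k : ℤ), 0; 0, ρ ^ (-(k : ℤ))]) :
    F0.det = 1 ∧
      F0 0 0 * F0 1 0 =
        ((T ^ ((4 * (k : ℝ) + 1) / 2) /
          ((2 * Real.pi) ^ (3 * k + 1) * (Real.pi ^ 2 - T) ^ ((k : ℝ) / 2)) : ℝ) : ℂ) ∧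
      F0 0 1 * F0 1 1 =
        -(((2 * Real.pi) ^ (3 * (k : ℤ) - 1) * (Real.pi ^ 2 - T) ^ ((k : ℝ) / 2) /
          T ^ ((4 * (k : ℝ) - 1) / 2) : ℝ) : ℂ) := by
  have hπ := Real.pi_pos
  set s := Real.sqrt (Real.pi ^ 2 - T) with hs_def
  set t := Real.sqrt T with ht_def
  have hsub : (0:ℝ) < Real.pi ^ 2 - T := by linarith
  have hs0 : 0 < s := Real.sqrt_pos.2 hsub
  have ht0 : 0 < t := Real.sqrt_pos.2 hT
  have hs2 : s ^ 2 = Real.pi ^ 2 - T := Real.sq_sqrt hsub.le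
  have ht2 : t ^ 2 = T := Real.sq_sqrt hT.le
  have hπC : (Real.pi : ℂ) ≠ 0 := by exact_mod_cast hπ.ne'
  set z : ℂ := (s:ℂ) + Complex.I * t with hz_def
  have hz0 : z ≠ 0 := by
    intro h
    have h2 := congrArg Complex.im h
    simp [hz_def] at h2
    exact ht0.ne' h2
  have hγ2 : γ ^ 2 = z / Real.pi := by
    rw [hγ, mul_pow]
    have h1 : ((1:ℂ) / (Real.sqrt Real.pi : ℂ)) ^ 2 = 1 / Real.pi := by
      rw [div_pow, one_pow]
      norm_cast
      rw [Real.sq_sqrt hπ.le]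
    have h2 : (z ^ ((1:ℂ)/2 : ℂ)) ^ 2 = z := by
      rw [show ((1:ℂ)/2 : ℂ) = (((2:ℕ):ℂ))⁻¹ by norm_num]
      exact Complex.cpow_nat_inv_pow z two_ne_zero
    rw [h1, h2]
    ring
  have hzw : z * ((s:ℂ) - Complex.I * t) = ((Real.pi:ℂ))^2 := by
    have e1 : z * ((s:ℂ) - Complex.I * t) = (s:ℂ)^2 - Complex.I^2 * (t:ℂ)^2 := by
      rw [hz_def]; ring
    have hst : s^2 + t^2 = Real.pi^2 := by rw [hs2, ht2]; ring
    rw [e1, Complex.I_sq]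
    calc (s:ℂ)^2 - (-1) * (t:ℂ)^2 = ((s^2 + t^2 : ℝ) : ℂ) := by push_cast; ring
      _ = _ := by rw [hst]; push_cast; ring
  have hγinv2 : γ⁻¹ ^ 2 = ((s:ℂ) - Complex.I * t) / Real.pi := by
    have hone : z / (Real.pi:ℂ) * (((s:ℂ) - Complex.I * t) / Real.pi) = 1 := by
      rw [div_mul_div_comm, hzw, ← sq]
      exact div_self (pow_ne_zero 2 hπC)
    rw [inv_pow, hγ2, inv_eq_of_mul_eq_one_right hone]
  have hγ0 : γ ≠ 0 := by
    intro h
    apply hz0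
    rw [h] at hγ2
    have h2 : (0:ℂ) = z / Real.pi := by simpa [zero_pow] using hγ2
    rcases div_eq_zero_iff.1 h2.symm with h3 | h3
    · exact h3
    · exact absurd h3 hπC
  have hγγ : γ * γ⁻¹ = 1 := mul_inv_cancel₀ hγ0
  have key : γ ^ 2 - γ⁻¹ ^ 2 = 2 * Complex.I * t / Real.pi := by
    rw [hγ2, hγinv2, hz_def]
    ring
  have hI2 : (Complex.I : ℂ) ≠ 0 := Complex.I_ne_zero
  have hP : (γ + γ⁻¹) / 2 * ((γ - γ⁻¹) / (2 * Complex.I)) = (t:ℂ) / (2*Real.pi) := by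
    rw [div_mul_div_comm]
    rw [show (γ+γ⁻¹)*(γ-γ⁻¹) = γ^2 - γ⁻¹^2 by ring, key]
    rw [div_div, div_eq_div_iff (mul_ne_zero hπC (by simp [hI2])) (by simp [hπC])]
    ring
  have hQ : (γ - γ⁻¹) / (-2 * Complex.I) * ((γ + γ⁻¹) / 2) = -((t:ℂ) / (2*Real.pi)) := by
    rw [div_mul_div_comm]
    rw [show (γ-γ⁻¹)*(γ+γ⁻¹) = γ^2 - γ⁻¹^2 by ring, key]
    rw [show -((t:ℂ) / (2*Real.pi)) = (-t) / (2*Real.pi) by ring]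
    rw [div_div, div_eq_div_iff (mul_ne_zero hπC (by simp [hI2])) (by simp [hπC])]
    ring
  have hdetM : (γ + γ⁻¹) / 2 * ((γ + γ⁻¹) / 2) -
      (γ - γ⁻¹) / (-2 * Complex.I) * ((γ - γ⁻¹) / (2 * Complex.I)) = 1 := by
    rw [div_mul_div_comm, div_mul_div_comm]
    have hden : (-2*Complex.I) * (2*Complex.I) = 4 := by
      have h := Complex.I_sq
      linear_combination (-4:ℂ) * h
    rw [hden, show ((2:ℂ)*2) = 4 by norm_num, div_sub_div_same]
    linear_combination hγγ
  -- nonvanishing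
  have hα0 : αinf ≠ 0 := by
    rw [hαinf]
    apply mul_ne_zero _ hI2
    apply div_ne_zero
    · rw [show ((s:ℂ) + Real.pi) = ((s + Real.pi : ℝ) : ℂ) by push_cast; ring]
      exact_mod_cast (by positivity : (0:ℝ) < s + Real.pi).ne'
    · exact_mod_cast ht0.ne'
  have hden : (0:ℝ) < (2 * Real.pi) ^ ((3:ℝ)/2) * (Real.pi ^ 2 - T) ^ ((1:ℝ)/4) := by positivity
  have hρ0 : ρ ≠ 0 := by
    rw [hρ, Complex.ofReal_ne_zero]
    exact (div_neg_of_neg_of_pos (by linarith) hden).ne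
  have hαα : αinf ^ (-(k:ℤ)) * αinf ^ (k:ℤ) = 1 := by
    rw [← zpow_add₀ hα0]; simp
  have hρρ : ρ ^ (k:ℤ) * ρ ^ (-(k:ℤ)) = 1 := by
    rw [← zpow_add₀ hρ0]; simp
  -- rho squared
  have e1 : ((2*Real.pi) ^ ((3:ℝ)/2)) ^ 2 = (2*Real.pi) ^ (3:ℕ) := by
    rw [← Real.rpow_natCast ((2*Real.pi) ^ ((3:ℝ)/2)) 2,
      ← Real.rpow_mul (by positivity : (0:ℝ) ≤ 2*Real.pi)]
    rw [show (3:ℝ)/2 * ((2:ℕ):ℝ) = ((3:ℕ):ℝ) by push_cast; ring]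
    rw [Real.rpow_natCast]
  have e2 : ((Real.pi ^ 2 - T) ^ ((1:ℝ)/4)) ^ 2 = s := by
    rw [← Real.rpow_natCast ((Real.pi ^ 2 - T) ^ ((1:ℝ)/4)) 2, ← Real.rpow_mul hsub.le]
    rw [show (1:ℝ)/4 * ((2:ℕ):ℝ) = (1:ℝ)/2 by push_cast; ring]
    rw [hs_def, Real.sqrt_eq_rpow]
  have hr2 : (-T / ((2 * Real.pi) ^ ((3:ℝ)/2) * (Real.pi ^ 2 - T) ^ ((1:ℝ)/4)))^2
      = T^2/((2*Real.pi)^3*s) := by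
    rw [div_pow, mul_pow, e1, e2, neg_sq]
  have hρsq : ρ ^ (k:ℤ) * ρ ^ (k:ℤ) = (((T^2/((2*Real.pi)^3*s))^k : ℝ) : ℂ) := by
    rw [zpow_natCast, ← pow_add, show k + k = 2*k by ring, pow_mul, hρ]
    norm_cast
    rw [hr2]
  have hρsqinv : ρ ^ (-(k:ℤ)) * ρ ^ (-(k:ℤ)) = (((T^2/((2*Real.pi)^3*s))^k : ℝ) : ℂ)⁻¹ := by
    rw [_root_.zpow_neg, ← mul_inv, hρsq]
  -- real exponent rewrites
  have hRa : T ^ ((4*(k:ℝ)+1)/2) = T^(2*k) * t := by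
    rw [show (4*(k:ℝ)+1)/2 = ((2*k : ℕ):ℝ) + (1/2 : ℝ) by push_cast; ring]
    rw [Real.rpow_add hT, Real.rpow_natCast, ht_def, Real.sqrt_eq_rpow]
  have hRc : T ^ ((4*(k:ℝ)-1)/2) = T^(2*k) / t := by
    rw [show (4*(k:ℝ)-1)/2 = ((2*k : ℕ):ℝ) - (1/2 : ℝ) by push_cast; ring]
    rw [Real.rpow_sub hT, Real.rpow_natCast, ht_def, Real.sqrt_eq_rpow]
  have hRb : (Real.pi ^ 2 - T) ^ ((k:ℝ)/2) = s^k := by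
    rw [show ((k:ℝ)/2) = (1/2 : ℝ) * ((k:ℕ):ℝ) by push_cast; ring]
    rw [Real.rpow_mul hsub.le, Real.rpow_natCast]
    rw [hs_def, Real.sqrt_eq_rpow]
  have hRd : (2*Real.pi:ℝ) ^ (3*(k:ℤ)-1) = (2*Real.pi)^(3*k) / (2*Real.pi) := by
    rw [zpow_sub₀ (by positivity : (2*Real.pi:ℝ) ≠ 0), zpow_one]
    rw [show (3*(k:ℤ)) = ((3*k : ℕ):ℤ) by push_cast; ring, zpow_natCast]
  have h2π : (2*Real.pi:ℝ) ≠ 0 := by positivity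
  refine ⟨?_, ?_, ?_⟩
  · rw [hF0, hM, Matrix.det_mul, Matrix.det_mul,
      Matrix.det_fin_two_of, Matrix.det_fin_two_of, Matrix.det_fin_two_of]
    simp only [mul_zero, zero_mul, sub_zero]
    rw [hαα, hρρ, hdetM]
    norm_num
  · rw [hF0, hM, Matrix.mul_fin_two, Matrix.mul_fin_two]
    simp only [Matrix.of_apply, Matrix.cons_val', Matrix.cons_val_zero, Matrix.cons_val_one, Matrix.head_cons,
      Matrix.empty_val', Matrix.cons_val_fin_one, Matrix.head_fin_const]
    rw [show ((T ^ ((4 * (k : ℝ) + 1) / 2) /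
          ((2 * Real.pi) ^ (3 * k + 1) * (Real.pi ^ 2 - T) ^ ((k : ℝ) / 2)) : ℝ) : ℂ) =
      (((t/(2*Real.pi)) * ((T^2/((2*Real.pi)^3*s))^k) : ℝ) : ℂ) from ?_]
    · push_cast
      calc _ = (αinf ^ (-(k:ℤ)) * αinf ^ (k:ℤ)) * ((γ+γ⁻¹)/2 * ((γ-γ⁻¹)/(2*Complex.I))) *
            (ρ^(k:ℤ) * ρ^(k:ℤ)) := by ring
        _ = _ := by rw [hαα, hP, hρsq]; push_cast; ring
    · rw [Complex.ofReal_inj, hRa, hRb]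
      field_simp
      ring_nf
      rw [show ((2:ℝ))^(k*3) = 8^k by rw [pow_mul']; norm_num]
      have h1 : Real.pi ^ (k*3) * (1/Real.pi)^(k*3) = 1 := by rw [← mul_pow, mul_one_div_cancel hπ.ne', one_pow]
      have h2 : s ^ k * (1/s)^k = 1 := by rw [← mul_pow, mul_one_div_cancel hs0.ne', one_pow]
      have h3 : (1/8:ℝ)^k * 8^k = 1 := by rw [← mul_pow]; norm_num
      linear_combination (-(T^(k*2)*Real.pi*2)) * ((s^k*(1/s)^k*((1/8:ℝ)^k*8^k)) * h1 + ((1/8:ℝ)^k*8^k) * h2 + h3)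
  · rw [hF0, hM, Matrix.mul_fin_two, Matrix.mul_fin_two]
    simp only [Matrix.of_apply, Matrix.cons_val', Matrix.cons_val_zero, Matrix.cons_val_one, Matrix.head_cons,
      Matrix.empty_val', Matrix.cons_val_fin_one, Matrix.head_fin_const]
    rw [show -(((2 * Real.pi) ^ (3 * (k:ℤ) - 1) * (Real.pi ^ 2 - T) ^ ((k : ℝ) / 2) /
          T ^ ((4 * (k : ℝ) - 1) / 2) : ℝ) : ℂ) =
      ((-((t/(2*Real.pi)) * (((T^2/((2*Real.pi)^3*s))^k)⁻¹) : ℝ) : ℝ) : ℂ) from ?_]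
    · push_cast
      calc _ = (αinf ^ (-(k:ℤ)) * αinf ^ (k:ℤ)) * ((γ-γ⁻¹)/(-2*Complex.I) * ((γ+γ⁻¹)/2)) *
            (ρ^(-(k:ℤ)) * ρ^(-(k:ℤ))) := by ring
        _ = _ := by rw [hαα, hQ, hρsqinv]; push_cast; ring
    · rw [show ((-((t/(2*Real.pi)) * (((T^2/((2*Real.pi)^3*s))^k)⁻¹) : ℝ) : ℝ) : ℂ) =
        -(((t/(2*Real.pi)) * (((T^2/((2*Real.pi)^3*s))^k)⁻¹) : ℝ) : ℂ) by push_cast; ring]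
      rw [neg_inj, Complex.ofReal_inj, hRc, hRb, hRd]
      field_simp
      ring_nf
      rw [show ((2:ℝ))^(k*3) = 8^k by rw [pow_mul']; norm_num]
      have h1 : Real.pi ^ (k*3) * (1/Real.pi)^(k*3) = 1 := by rw [← mul_pow, mul_one_div_cancel hπ.ne', one_pow]
      have h2 : s ^ k * (1/s)^k = 1 := by rw [← mul_pow, mul_one_div_cancel hs0.ne', one_pow]
      have h3 : (1/8:ℝ)^k * 8^k = 1 := by rw [← mul_pow]; norm_num
      linear_combination (T^(k*2)) * ((s^k*(1/s)^k*((1/8:ℝ)^k*8^k)) * h1 + ((1/8:ℝ)^k*8^k) * h2 + h3)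
end

section
/- Let $B$ be a $2\times 2$ complex matrix, $F_0, F_1$ be $2\times 2$ complex matrices with $F_0$ invertible, $Q$ a strictly upper triangular matrix $\begin{pmatrix} 0 & q \\ 0 & 0 \end{pmatrix}$ with $q \ne 0$, and $W_1 \ne 0$ a complex scalar with $W_1 + q\,(F_0^{-1}F_1)_{21} \neq 0$. If $B$ satisfies the two matrix equations $B F_0 Q = 0$ and $B F_0 + \frac{1}{W_1}F_0 Q + \frac{1}{W_1} B F_1 Q = 0$, then $B = \frac{-F_0 Q F_0^{-1}}{W_1 + q\,(F_0^{-1}F_1)_{21}}$. -/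
open Matrix

theorem stmt18 (B F0 F1 Q : Matrix (Fin 2) (Fin 2) ℂ) (q W1 : ℂ)
    (hq : q ≠ 0) (hW : W1 ≠ 0)
    (hQ : Q = !![0, q; 0, 0])
    (hF0 : IsUnit F0)
    (hden : W1 + q * (F0⁻¹ * F1) 1 0 ≠ 0)
    (h1 : B * F0 * Q = 0)
    (h2 : B * F0 + W1⁻¹ • (F0 * Q) + W1⁻¹ • (B * F1 * Q) = 0) :
    B = (-(W1 + q * (F0⁻¹ * F1) 1 0)⁻¹) • (F0 * Q * F0⁻¹) := by
  have hdet : IsUnit F0.det := (Matrix.isUnit_iff_isUnit_det F0).mp hF0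
  have hinv : F0 * F0⁻¹ = 1 := Matrix.mul_nonsing_inv _ hdet
  have hBF1 : B * F1 = (B * F0) * (F0⁻¹ * F1) := by
    rw [Matrix.mul_assoc, ← Matrix.mul_assoc F0, hinv, Matrix.one_mul]
  set D := B * F0 with hD
  set M := F0⁻¹ * F1 with hM
  subst hQ
  have hD00 : D 0 0 = 0 := by
    have := congrFun (congrFun h1 0) 1
    simp [Matrix.mul_apply, Fin.sum_univ_two] at this
    tauto
  have hD10 : D 1 0 = 0 := by
    have := congrFun (congrFun h1 1) 1
    simp [Matrix.mul_apply, Fin.sum_univ_two] at this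
    tauto
  rw [hBF1] at h2
  have hkey : D = (-(W1 + q * M 1 0)⁻¹) • (F0 * !![0, q; 0, 0]) := by
    ext i j
    have hd : W1 + q * M 1 0 ≠ 0 := hden
    fin_cases j
    · fin_cases i <;> simp [Matrix.mul_apply, Fin.sum_univ_two, hD00, hD10]
    · have h2e := congrFun (congrFun h2 i) 1
      fin_cases i <;>
        · simp [Matrix.mul_apply, Fin.sum_univ_two, Matrix.add_apply, hD00, hD10] at h2e ⊢
          field_simp [hd] at h2e ⊢
          linear_combination h2e
  have : B = D * F0⁻¹ := by
    rw [hD, Matrix.mul_assoc, hinv, Matrix.mul_one]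
  rw [this, hkey, Matrix.smul_mul, Matrix.mul_assoc]
end
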